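/- Every cubic graph G satisfies ν₂(G) ≤ (|V(G)| + 2·ν₃(G))/4, equivalently ν₃(G) ≥ 2·ν₂(G) − |V(G)|/2. -/

import Mathlib

structure Multigraph where
  V : Type
  E : Type
  fintypeV : Fintype V
  decEqV : DecidableEq V
  fintypeE : Fintype E
  decEqE : DecidableEq E
  ends : E → Sym2 V

attribute [instance] Multigraph.fintypeV Multigraph.decEqV Multigraph.fintypeE Multigraph.decEqE

namespace Multigraph

/-- `e` is a loop if both of its endpoints coincide. -/
def IsLoop (G : Multigraph) (e : G.E) : Prop := (G.ends e).IsDiag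

/-- A loopless multigraph. -/
def Loopless (G : Multigraph) : Prop := ∀ e, ¬ G.IsLoop e

/-- Degree of a vertex: loops count twice. -/
def deg (G : Multigraph) (v : G.V) : ℕ :=
  ∑ e : G.E, (if G.ends e = Sym2.diag v then 2 else if v ∈ G.ends e then 1 else 0)

/-- Adjacency via some edge. -/
def Adj (G : Multigraph) (u v : G.V) : Prop := ∃ e, G.ends e = s(u, v)

/-- Connectivity. -/
def Connected (G : Multigraph) : Prop := ∀ u v : G.V, Relation.ReflTransGen G.Adj u v

/-- A matching: a set of non-loop edges no two of which share an endpoint. -/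
def IsMatching (G : Multigraph) (M : Finset G.E) : Prop :=
  (∀ e ∈ M, ¬ G.IsLoop e) ∧
  ∀ e ∈ M, ∀ f ∈ M, e ≠ f → ∀ v : G.V, v ∈ G.ends e → v ∉ G.ends f

/-- A maximum matching. -/
def IsMaximumMatching (G : Multigraph) (M : Finset G.E) : Prop :=
  G.IsMatching M ∧ ∀ M' : Finset G.E, G.IsMatching M' → M'.card ≤ M.card

/-- `v` is saturated by `M`. -/
def Saturated (G : Multigraph) (M : Finset G.E) (v : G.V) : Prop :=
  ∃ e ∈ M, v ∈ G.ends e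

/-- Size of a maximum matching. -/
noncomputable def nu1 (G : Multigraph) : ℕ :=
  sSup {m | ∃ M : Finset G.E, G.IsMatching M ∧ M.card = m}

/-- Max number of edges coverable by two disjoint matchings. -/
noncomputable def nu2 (G : Multigraph) : ℕ :=
  sSup {m | ∃ H H' : Finset G.E, G.IsMatching H ∧ G.IsMatching H' ∧
    Disjoint H H' ∧ H.card + H'.card = m}

/-- Max number of edges coverable by three pairwise disjoint matchings. -/
noncomputable def nu3 (G : Multigraph) : ℕ :=
  sSup {m | ∃ H₁ H₂ H₃ : Finset G.E, G.IsMatching H₁ ∧ G.IsMatching H₂ ∧ G.IsMatching H₃ ∧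
    Disjoint H₁ H₂ ∧ Disjoint H₁ H₃ ∧ Disjoint H₂ H₃ ∧ H₁.card + H₂.card + H₃.card = m}

/-- Subdividing the edge `e`, with endpoints `u`, `v`, once: replace it by a path `u - w - v`
through a new vertex `w`. -/
def subdivideOnce (G : Multigraph) (e : G.E) (u v : G.V) : Multigraph where
  V := G.V ⊕ Unit
  E := {f : G.E // f ≠ e} ⊕ Bool
  fintypeV := inferInstance
  decEqV := inferInstance
  fintypeE := inferInstance
  decEqE := inferInstance
  ends := fun f =>
    match f with
    | Sum.inl ⟨f, _⟩ => (G.ends f).map Sum.inl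
    | Sum.inr true => s(Sum.inl u, Sum.inr ())
    | Sum.inr false => s(Sum.inl v, Sum.inr ())

/-- Subdividing every edge `e` exactly `k e` times, where `fst`/`snd` pick out the endpoints
of every edge. The edge `e` is replaced by the path
`fst e, (e,0), (e,1), …, (e, k e - 1), snd e` of length `k e + 1`. -/
def subdivide (G : Multigraph) (fst snd : G.E → G.V) (k : G.E → ℕ) : Multigraph where
  V := G.V ⊕ (Σ e : G.E, Fin (k e))
  E := Σ e : G.E, Fin (k e + 1)
  fintypeV := inferInstance
  decEqV := inferInstance
  fintypeE := inferInstance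
  decEqE := inferInstance
  ends := fun f =>
    s( if h : f.2.val = 0 then Sum.inl (fst f.1)
       else Sum.inr ⟨f.1, ⟨f.2.val - 1, by omega⟩⟩,
       if h : f.2.val = k f.1 then Sum.inl (snd f.1)
       else Sum.inr ⟨f.1, ⟨f.2.val, by have := f.2.isLt; omega⟩⟩ )


open Finset

private lemma sym2_eq_of_mem_mem {α : Type*} {z : Sym2 α} {u w : α} (hu : u ∈ z) (hw : w ∈ z)
    (h : u ≠ w) : z = s(u, w) := by
  induction z using Sym2.inductionOn with
  | _ a b =>
    rw [Sym2.mem_iff] at hu hw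
    rcases hu with rfl | rfl <;> rcases hw with rfl | rfl
    · exact absurd rfl h
    · rfl
    · exact Sym2.eq_swap
    · exact absurd rfl h

private lemma exists_other {α : Type*} {z : Sym2 α} {v : α} (hv : v ∈ z) (hd : ¬ z.IsDiag) :
    ∃ x, x ≠ v ∧ z = s(v, x) := by
  induction z using Sym2.inductionOn with
  | _ a b =>
    rw [Sym2.mem_iff] at hv
    rw [Sym2.mk_isDiag_iff] at hd
    rcases hv with rfl | rfl
    · exact ⟨b, fun h => hd h.symm, rfl⟩
    · exact ⟨a, hd, Sym2.eq_swap⟩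

variable {G : Multigraph}

private lemma ends_eq (hl : G.Loopless) (e : G.E) : ∃ a b : G.V, a ≠ b ∧ G.ends e = s(a, b) := by
  obtain ⟨a, b, h⟩ : ∃ a b, G.ends e = s(a, b) := by
    induction G.ends e using Sym2.inductionOn with
    | _ a b => exact ⟨a, b, rfl⟩
  refine ⟨a, b, ?_, h⟩
  intro hab
  exact hl e (by rw [IsLoop, h, Sym2.mk_isDiag_iff]; exact hab)

open Classical in
noncomputable def inc (G : Multigraph) (v : G.V) : Finset G.E :=
  univ.filter (fun e => v ∈ G.ends e)

lemma mem_inc {v : G.V} {e : G.E} : e ∈ G.inc v ↔ v ∈ G.ends e := by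
  classical simp [inc]

lemma card_inc (hl : G.Loopless) (hc : ∀ v, G.deg v = 3) (v : G.V) : (G.inc v).card = 3 := by
  classical
  have h := hc v
  rw [deg] at h
  have h2 : ∀ e : G.E, (if G.ends e = Sym2.diag v then 2 else if v ∈ G.ends e then 1 else 0)
      = if v ∈ G.ends e then 1 else 0 := fun e => by
    rw [if_neg (fun hh => hl e (by rw [IsLoop, hh]; exact Sym2.diag_isDiag v))]
  rw [Finset.sum_congr rfl (fun e _ => h2 e)] at h
  rw [inc]
  rw [Finset.card_filter]
  convert h using 2

open Classical in
noncomputable def cov (G : Multigraph) (H : Finset G.E) : Finset G.V :=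
  univ.filter (fun v => ∃ e ∈ H, v ∈ G.ends e)

lemma mem_cov {H : Finset G.E} {v : G.V} : v ∈ G.cov H ↔ ∃ e ∈ H, v ∈ G.ends e := by
  classical simp [cov]

lemma IsMatching.unique {H : Finset G.E} (hm : G.IsMatching H) {e f : G.E} (he : e ∈ H)
    (hf : f ∈ H) {v : G.V} (hve : v ∈ G.ends e) (hvf : v ∈ G.ends f) : e = f := by
  by_contra h
  exact hm.2 e he f hf h v hve hvf

lemma card_cov (hl : G.Loopless) {H : Finset G.E} (hm : G.IsMatching H) :
    (G.cov H).card = 2 * H.card := by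
  classical
  have hcov : G.cov H = H.biUnion (fun e => univ.filter (fun v => v ∈ G.ends e)) := by
    ext v; simp [mem_cov]
  rw [hcov, Finset.card_biUnion]
  · rw [Finset.sum_congr rfl (fun e he => ?_), Finset.sum_const, smul_eq_mul, mul_comm]
    obtain ⟨a, b, hab, hends⟩ := ends_eq hl e
    have : univ.filter (fun v => v ∈ G.ends e) = {a, b} := by
      ext v; simp [hends, Sym2.mem_iff]
    rw [this, Finset.card_insert_of_notMem (by simp [hab]), Finset.card_singleton]
  · intro e he f hf hef
    rw [Function.onFun, Finset.disjoint_left]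
    intro v hv hv'
    simp only [Finset.mem_filter] at hv hv'
    exact hm.2 e he f hf hef v hv.2 hv'.2


lemma key (hl : G.Loopless) (hc : ∀ v, G.deg v = 3)
    {H₁ H₂ H₃ : Finset G.E} (m₁ : G.IsMatching H₁) (m₂ : G.IsMatching H₂)
    (m₃ : G.IsMatching H₃) (d12 : Disjoint H₁ H₂)
    (h₃R : ∀ e ∈ H₃, e ∉ H₁ ∧ e ∉ H₂)
    (hmax : ∀ M : Finset G.E, G.IsMatching M → (∀ e ∈ M, e ∉ H₁ ∧ e ∉ H₂) → M.card ≤ H₃.card) :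
    (G.cov H₁ ∩ G.cov H₂).card ≤ 2 * H₃.card + ((G.cov H₁ ∪ G.cov H₂)ᶜ).card := by
  classical
  set D : Finset G.V := G.cov H₁ ∩ G.cov H₂ with hD
  set N₀ : Finset G.V := (G.cov H₁ ∪ G.cov H₂)ᶜ with hN₀
  -- "R-edge" predicate
  set RE : G.E → Prop := fun f => f ∉ H₁ ∧ f ∉ H₂ with hRE
  -- Step A : unique R-edge at D-vertices
  have hRv : ∀ v ∈ D, ∃ f : G.E, (RE f ∧ v ∈ G.ends f) ∧
      ∀ g : G.E, RE g → v ∈ G.ends g → g = f := by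
    intro v hv
    rw [hD, Finset.mem_inter, mem_cov, mem_cov] at hv
    obtain ⟨⟨e₁, he₁, hve₁⟩, ⟨e₂, he₂, hve₂⟩⟩ := hv
    have h12 : e₁ ≠ e₂ := fun h => (Finset.disjoint_left.mp d12 he₁) (h ▸ he₂)
    have hsub : ({e₁, e₂} : Finset G.E) ⊆ G.inc v := by
      intro f hf
      rcases Finset.mem_insert.mp hf with rfl | hf
      · exact mem_inc.mpr hve₁
      · exact mem_inc.mpr ((Finset.mem_singleton.mp hf) ▸ hve₂)
    have hcard2 : ({e₁, e₂} : Finset G.E).card = 2 := by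
      rw [Finset.card_insert_of_notMem (by simp [h12]), Finset.card_singleton]
    have hsd : (G.inc v \ {e₁, e₂}).card = 1 := by
      rw [Finset.card_sdiff_of_subset hsub, card_inc hl hc, hcard2]
    obtain ⟨f, hf⟩ := Finset.card_eq_one.mp hsd
    have hmem : ∀ g : G.E, g ∈ G.inc v \ ({e₁, e₂} : Finset G.E) ↔ (RE g ∧ v ∈ G.ends g) := by
      intro g
      rw [Finset.mem_sdiff, mem_inc, Finset.mem_insert, Finset.mem_singleton]
      constructor
      · rintro ⟨hg, hg'⟩
        refine ⟨⟨fun h1 => hg' (Or.inl (m₁.unique h1 he₁ hg hve₁)),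
                 fun h2 => hg' (Or.inr (m₂.unique h2 he₂ hg hve₂))⟩, hg⟩
      · rintro ⟨⟨hg1, hg2⟩, hg⟩
        exact ⟨hg, by rintro (rfl | rfl) <;> [exact hg1 he₁; exact hg2 he₂]⟩
    refine ⟨f, (hmem f).mp (hf ▸ Finset.mem_singleton_self f), fun g hg1 hg2 => ?_⟩
    have := (hmem g).mpr ⟨hg1, hg2⟩
    rw [hf, Finset.mem_singleton] at this
    exact this
  -- Step B : maximality, length-1 augment
  have hB : ∀ f : G.E, RE f → (∀ w ∈ G.ends f, w ∉ G.cov H₃) → False := by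
    intro f hfR hw
    obtain ⟨a, b, hab, hends⟩ := ends_eq hl f
    have hf3 : f ∉ H₃ := fun h =>
      hw a (by rw [hends]; exact Sym2.mem_mk_left a b) (mem_cov.mpr ⟨f, h, by
        rw [hends]; exact Sym2.mem_mk_left a b⟩)
    have hnew : ∀ e ∈ H₃, ∀ w, w ∈ G.ends f → w ∉ G.ends e := by
      intro e he w hwf hwe
      exact hw w hwf (mem_cov.mpr ⟨e, he, hwe⟩)
    have hM : G.IsMatching (insert f H₃) := by
      constructor
      · intro e _; exact hl e
      · intro e he e' he' hne v hve
        rcases Finset.mem_insert.mp he with he1 | he1 <;>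
          rcases Finset.mem_insert.mp he' with he2 | he2
        · exact absurd (he1.trans he2.symm) hne
        · exact hnew e' he2 v (he1 ▸ hve)
        · exact fun hv' => hnew e he1 v (he2 ▸ hv') hve
        · exact m₃.2 e he1 e' he2 hne v hve
    have := hmax (insert f H₃) hM (by
      intro e he
      rcases Finset.mem_insert.mp he with rfl | he
      · exact hfR
      · exact h₃R e he)
    rw [Finset.card_insert_of_notMem hf3] at this
    omega
  -- Step B3 : maximality, length-3 augment
  have hB3 : ∀ m ∈ H₃, ∀ (a b v v' : G.V) (f g : G.E),
      G.ends m = s(a, b) → v ≠ v' → RE f → RE g →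
      G.ends f = s(v, a) → G.ends g = s(v', b) →
      v ∉ G.cov H₃ → v' ∉ G.cov H₃ → False := by
    intro m hm a b v v' f g hmab hvv' hfR hgR hf hg hv hv'
    have hab : a ≠ b := by
      intro h
      exact hl m (by rw [IsLoop, hmab, Sym2.mk_isDiag_iff]; exact h)
    have ha3 : a ∈ G.cov H₃ := mem_cov.mpr ⟨m, hm, by rw [hmab]; exact Sym2.mem_mk_left a b⟩
    have hb3 : b ∈ G.cov H₃ := mem_cov.mpr ⟨m, hm, by rw [hmab]; exact Sym2.mem_mk_right a b⟩
    have hva : v ≠ a := fun h => hv (h ▸ ha3)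
    have hvb : v ≠ b := fun h => hv (h ▸ hb3)
    have hv'a : v' ≠ a := fun h => hv' (h ▸ ha3)
    have hv'b : v' ≠ b := fun h => hv' (h ▸ hb3)
    have haM : a ∈ G.ends m := by rw [hmab]; exact Sym2.mem_mk_left a b
    have hbM : b ∈ G.ends m := by rw [hmab]; exact Sym2.mem_mk_right a b
    have hvm : v ∈ G.ends f := by rw [hf]; exact Sym2.mem_mk_left v a
    have ham : a ∈ G.ends f := by rw [hf]; exact Sym2.mem_mk_right v a
    have hv'm : v' ∈ G.ends g := by rw [hg]; exact Sym2.mem_mk_left v' b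
    have hbm : b ∈ G.ends g := by rw [hg]; exact Sym2.mem_mk_right v' b
    have hf3 : f ∉ H₃ := fun h => hv (mem_cov.mpr ⟨f, h, hvm⟩)
    have hg3 : g ∉ H₃ := fun h => hv' (mem_cov.mpr ⟨g, h, hv'm⟩)
    have hfg : f ≠ g := by
      intro h
      rw [h, hg, Sym2.mem_iff] at hvm
      rcases hvm with h' | h'
      · exact hvv' h'
      · exact hvb h'
    -- vertex membership characterizations
    have hfmem : ∀ w, w ∈ G.ends f ↔ (w = v ∨ w = a) := fun w => by rw [hf, Sym2.mem_iff]
    have hgmem : ∀ w, w ∈ G.ends g ↔ (w = v' ∨ w = b) := fun w => by rw [hg, Sym2.mem_iff]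
    -- the improved matching
    set M : Finset G.E := insert f (insert g (H₃.erase m)) with hMdef
    -- disjointness of ends of f/g with old edges
    have hfold : ∀ e ∈ H₃.erase m, ∀ w, w ∈ G.ends f → w ∉ G.ends e := by
      intro e he w hw hwe
      obtain ⟨hem, he3⟩ := Finset.mem_erase.mp he
      rcases (hfmem w).mp hw with rfl | rfl
      · exact hv (mem_cov.mpr ⟨e, he3, hwe⟩)
      · exact hem (m₃.unique he3 hm hwe haM)
    have hgold : ∀ e ∈ H₃.erase m, ∀ w, w ∈ G.ends g → w ∉ G.ends e := by
      intro e he w hw hwe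
      obtain ⟨hem, he3⟩ := Finset.mem_erase.mp he
      rcases (hgmem w).mp hw with rfl | rfl
      · exact hv' (mem_cov.mpr ⟨e, he3, hwe⟩)
      · exact hem (m₃.unique he3 hm hwe hbM)
    have hfgdisj : ∀ w, w ∈ G.ends f → w ∉ G.ends g := by
      intro w hw hw'
      rcases (hfmem w).mp hw with rfl | rfl <;> rcases (hgmem w).mp hw' with h | h
      · exact hvv' h
      · exact hvb h
      · exact hv'a h.symm
      · exact hab h
    have hM : G.IsMatching M := by
      constructor
      · intro e _; exact hl e
      · intro e he e' he' hne w hwe hwe'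
        rw [hMdef, Finset.mem_insert, Finset.mem_insert] at he he'
        rcases he with rfl | rfl | he <;> rcases he' with rfl | rfl | he'
        · exact hne rfl
        · exact hfgdisj w hwe hwe'
        · exact hfold e' he' w hwe hwe'
        · exact hfgdisj w hwe' hwe
        · exact hne rfl
        · exact hgold e' he' w hwe hwe'
        · exact hfold e he w hwe' hwe
        · exact hgold e he w hwe' hwe
        · exact m₃.2 e (Finset.mem_of_mem_erase he) e' (Finset.mem_of_mem_erase he') hne w hwe hwe'
    have hMR : ∀ e ∈ M, e ∉ H₁ ∧ e ∉ H₂ := by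
      intro e he
      rw [hMdef, Finset.mem_insert, Finset.mem_insert] at he
      rcases he with rfl | rfl | he
      · exact hfR
      · exact hgR
      · exact h₃R e (Finset.mem_of_mem_erase he)
    have hle := hmax M hM hMR
    have hg' : g ∉ H₃.erase m := fun h => hg3 (Finset.mem_of_mem_erase h)
    have hf' : f ∉ insert g (H₃.erase m) := by
      rw [Finset.mem_insert]
      rintro (rfl | h)
      · exact hfg rfl
      · exact hf3 (Finset.mem_of_mem_erase h)
    have hcM : M.card = (H₃.erase m).card + 2 := by
      rw [hMdef, Finset.card_insert_of_notMem hf', Finset.card_insert_of_notMem hg']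
    have h1 : 1 ≤ H₃.card := Finset.card_pos.mpr ⟨m, hm⟩
    have herase := Finset.card_erase_of_mem hm
    omega
  -- Step C : charging existence
  have hCH : ∀ v ∈ D, ∃ m, m ∈ H₃ ∧ (v ∈ G.ends m ∨
      (v ∉ G.cov H₃ ∧ ∃ f x, RE f ∧ x ≠ v ∧ G.ends f = s(v, x) ∧ x ∈ G.ends m)) := by
    intro v hv
    obtain ⟨f, ⟨⟨hf1, hf2⟩, hvf⟩, -⟩ := hRv v hv
    by_cases hv3 : v ∈ G.cov H₃
    · obtain ⟨m, hm, hvm⟩ := mem_cov.mp hv3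
      exact ⟨m, hm, Or.inl hvm⟩
    · obtain ⟨x, hxv, hfx⟩ := exists_other hvf (hl f)
      by_cases hx3 : x ∈ G.cov H₃
      · obtain ⟨m, hm, hxm⟩ := mem_cov.mp hx3
        exact ⟨m, hm, Or.inr ⟨hv3, f, x, ⟨hf1, hf2⟩, hxv, hfx, hxm⟩⟩
      · exact absurd (hB f ⟨hf1, hf2⟩ (by
          intro w hw
          rw [hfx, Sym2.mem_iff] at hw
          rcases hw with rfl | rfl
          · exact hv3
          · exact hx3)) not_false
  rcases D.eq_empty_or_nonempty with hDe | ⟨v₀, hv₀⟩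
  · rw [hDe]; simp
  have hEne : Nonempty G.E := ⟨(hCH v₀ hv₀).choose⟩
  set ch : G.V → G.E := fun v =>
    if h : v ∈ D then (hCH v h).choose else Classical.arbitrary G.E with hch
  have hchspec : ∀ v ∈ D, ch v ∈ H₃ ∧ (v ∈ G.ends (ch v) ∨
      (v ∉ G.cov H₃ ∧ ∃ f x, RE f ∧ x ≠ v ∧ G.ends f = s(v, x) ∧ x ∈ G.ends (ch v))) := by
    intro v hv
    rw [hch]
    simp only [dif_pos hv]
    exact (hCH v hv).choose_spec
  have hfib := Finset.card_eq_sum_card_fiberwise (fun v hv => (hchspec v hv).1)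
  rw [hfib]
  -- per-fiber bound
  have hfibbd : ∀ m ∈ H₃, (D.filter (fun v => ch v = m)).card
      ≤ 2 + (N₀.filter (fun x => x ∈ G.ends m)).card := by
    intro m hm
    obtain ⟨a, b, hab, hmab⟩ := ends_eq hl m
    set F := D.filter (fun v => ch v = m) with hF
    have hFspec : ∀ v ∈ F, v ∈ D ∧ (v ∈ G.ends m ∨ (v ∉ G.cov H₃ ∧
        ∃ f x, RE f ∧ x ≠ v ∧ G.ends f = s(v, x) ∧ x ∈ G.ends m)) := by
      intro v hv
      rw [hF, Finset.mem_filter] at hv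
      obtain ⟨hvD, hvm⟩ := hv
      have h := (hchspec v hvD).2
      rw [hvm] at h
      exact ⟨hvD, h⟩
    set Fsat := F.filter (fun v => v ∈ G.ends m) with hFsat
    set Fexp := F.filter (fun v => v ∉ G.ends m) with hFexp
    have hsplit : Fsat.card + Fexp.card = F.card :=
      Finset.card_filter_add_card_filter_not (fun v => v ∈ G.ends m)
    have hsatsub : Fsat ⊆ ({a, b} : Finset G.V) := by
      intro v hv
      rw [hFsat, Finset.mem_filter] at hv
      have h := hv.2
      rw [hmab, Sym2.mem_iff] at h
      simpa using h
    have hFsat2 : Fsat.card ≤ 2 := by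
      calc Fsat.card ≤ ({a, b} : Finset G.V).card := Finset.card_le_card hsatsub
        _ ≤ 2 := (Finset.card_insert_le _ _).trans (by simp)
    have hexp : ∀ v ∈ Fexp, v ∉ G.cov H₃ ∧
        ∃ f x, RE f ∧ x ≠ v ∧ G.ends f = s(v, x) ∧ x ∈ G.ends m := by
      intro v hv
      rw [hFexp, Finset.mem_filter] at hv
      rcases (hFspec v hv.1).2 with h | h
      · exact absurd h hv.2
      · exact h
    have hexpF : ∀ v ∈ Fexp, v ∈ F := fun v hv => (Finset.mem_filter.mp hv).1
    have hexpD : ∀ v ∈ Fexp, v ∈ D := fun v hv =>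
      (Finset.mem_filter.mp (hexpF v hv)).1
    rcases Fexp.eq_empty_or_nonempty with hFe | ⟨v₀, hv₀⟩
    · rw [hFe] at hsplit
      simp only [Finset.card_empty] at hsplit
      omega
    obtain ⟨hv₀3, f₀, x₀, hf₀R, hx₀v, hf₀, hx₀m⟩ := hexp v₀ hv₀
    have hxeq : ∀ v ∈ Fexp, ∀ f x, RE f → x ≠ v → G.ends f = s(v, x) → x ∈ G.ends m →
        x = x₀ := by
      intro v hv f x hfR hxv hf hxm
      obtain ⟨hv3, -⟩ := hexp v hv
      by_contra hne
      by_cases hvv : v = v₀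
      · subst hvv
        obtain ⟨f', -, huniq⟩ := hRv v (hexpD v hv)
        have h1 : f = f' := huniq f hfR (by rw [hf]; exact Sym2.mem_mk_left v x)
        have h2 : f₀ = f' := huniq f₀ hf₀R (by rw [hf₀]; exact Sym2.mem_mk_left v x₀)
        have hxmem : x ∈ s(v, x₀) := by
          rw [← hf₀, h2, ← h1, hf]
          exact Sym2.mem_mk_right v x
        rw [Sym2.mem_iff] at hxmem
        rcases hxmem with h | h
        · exact hxv h
        · exact hne h
      · exact hB3 m hm x x₀ v v₀ f f₀ (sym2_eq_of_mem_mem hxm hx₀m hne) hvv hfR hf₀R hf hf₀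
          hv3 hv₀3
    set P : G.V → G.E → Prop := fun v f => RE f ∧ ∃ x, x ≠ v ∧ G.ends f = s(v, x) ∧
      x ∈ G.ends m with hP
    set fch : G.V → G.E := fun v => if h : ∃ f, P v f then h.choose else f₀ with hfchdef
    have hfchspec : ∀ v ∈ Fexp, RE (fch v) ∧ G.ends (fch v) = s(v, x₀) := by
      intro v hv
      obtain ⟨hv3, f, x, hfR, hxv, hfx, hxm⟩ := hexp v hv
      have hex : ∃ f, P v f := ⟨f, hfR, x, hxv, hfx, hxm⟩
      rw [hfchdef]
      simp only [dif_pos hex]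
      obtain ⟨hR, x', hx'v, hf', hx'm⟩ := hex.choose_spec
      have hx' : x' = x₀ := hxeq v hv _ x' hR hx'v hf' hx'm
      exact ⟨hR, hx' ▸ hf'⟩
    have hx₀3 : x₀ ∈ G.cov H₃ := mem_cov.mpr ⟨m, hm, hx₀m⟩
    have hvx₀ : ∀ v ∈ Fexp, v ≠ x₀ := fun v hv h => (hexp v hv).1 (h ▸ hx₀3)
    have hfchmemv : ∀ v ∈ Fexp, v ∈ G.ends (fch v) := by
      intro v hv
      rw [(hfchspec v hv).2]
      exact Sym2.mem_mk_left v x₀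
    have hfchmemx : ∀ v ∈ Fexp, x₀ ∈ G.ends (fch v) := by
      intro v hv
      rw [(hfchspec v hv).2]
      exact Sym2.mem_mk_right v x₀
    have hfchne_m : ∀ v ∈ Fexp, fch v ≠ m := by
      intro v hv h
      have hvm : v ∈ G.ends m := h ▸ hfchmemv v hv
      exact (Finset.mem_filter.mp hv).2 hvm
    have hinj : Set.InjOn fch Fexp := by
      intro v hv v' hv' h
      have h1 : v' ∈ G.ends (fch v) := h ▸ hfchmemv v' hv'
      rw [(hfchspec v hv).2, Sym2.mem_iff] at h1
      rcases h1 with h1 | h1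
      · exact h1.symm
      · exact absurd h1 (hvx₀ v' hv')
    have himg : insert m (Fexp.image fch) ⊆ G.inc x₀ := by
      intro e he
      rcases Finset.mem_insert.mp he with rfl | he
      · exact mem_inc.mpr hx₀m
      · obtain ⟨v, hv, rfl⟩ := Finset.mem_image.mp he
        exact mem_inc.mpr (hfchmemx v hv)
    have hmnotimg : m ∉ Fexp.image fch := by
      rw [Finset.mem_image]
      rintro ⟨v, hv, h⟩
      exact hfchne_m v hv h
    have hcardbound : Fexp.card + 1 ≤ 3 := by
      have h1 := Finset.card_le_card himg
      rw [Finset.card_insert_of_notMem hmnotimg, Finset.card_image_of_injOn hinj,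
        card_inc hl hc] at h1
      omega
    have hFsat1 : Fsat.card ≤ 1 := by
      by_contra hcon
      push_neg at hcon
      have heq : Fsat = ({a, b} : Finset G.V) := by
        apply Finset.eq_of_subset_of_card_le hsatsub
        have : ({a, b} : Finset G.V).card ≤ 2 := (Finset.card_insert_le _ _).trans (by simp)
        omega
      have hx₀ab : x₀ = a ∨ x₀ = b := by
        rw [hmab, Sym2.mem_iff] at hx₀m
        exact hx₀m
      have hx₀D : x₀ ∈ D := by
        have hx₀F : x₀ ∈ Fsat := by
          rw [heq]
          rcases hx₀ab with rfl | rfl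
          · exact Finset.mem_insert_self _ _
          · exact Finset.mem_insert_of_mem (Finset.mem_singleton_self _)
        exact (Finset.mem_filter.mp (Finset.mem_filter.mp hx₀F).1).1
      obtain ⟨f', -, huniq⟩ := hRv x₀ hx₀D
      have h1 : fch v₀ = f' := huniq _ (hfchspec v₀ hv₀).1 (hfchmemx v₀ hv₀)
      have h2 : m = f' := huniq m (h₃R m hm) hx₀m
      exact hfchne_m v₀ hv₀ (h1.trans h2.symm)
    rcases Nat.lt_or_ge Fexp.card 2 with h2 | h2
    · omega
    · have hx₀N : x₀ ∈ N₀ := by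
        rw [hN₀, Finset.mem_compl, Finset.mem_union]
        push_neg
        constructor <;>
        · intro hcov1
          obtain ⟨g, hg, hxg⟩ := mem_cov.mp hcov1
          have hgm : g ≠ m := fun h =>
            (by rcases h₃R m hm with ⟨p1, p2⟩; first | exact p1 (h ▸ hg) | exact p2 (h ▸ hg))
          have hgimg : g ∉ Fexp.image fch := by
            rw [Finset.mem_image]
            rintro ⟨v, hv, rfl⟩
            obtain ⟨hh1, hh2⟩ := (hfchspec v hv).1
            first | exact hh1 hg | exact hh2 hg
          have hsub2 : insert g (insert m (Fexp.image fch)) ⊆ G.inc x₀ := by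
            intro e he
            rcases Finset.mem_insert.mp he with rfl | he
            · exact mem_inc.mpr hxg
            · exact himg he
          have hc2 := Finset.card_le_card hsub2
          rw [Finset.card_insert_of_notMem (by
                rw [Finset.mem_insert]
                rintro (rfl | h)
                · exact hgm rfl
                · exact hgimg h),
              Finset.card_insert_of_notMem hmnotimg, Finset.card_image_of_injOn hinj,
              card_inc hl hc] at hc2
          omega
      have hpos : 0 < (N₀.filter (fun x => x ∈ G.ends m)).card :=
        Finset.card_pos.mpr ⟨x₀, Finset.mem_filter.mpr ⟨hx₀N, hx₀m⟩⟩
      omega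
  calc ∑ m ∈ H₃, (D.filter (fun v => ch v = m)).card
      ≤ ∑ m ∈ H₃, (2 + (N₀.filter (fun x => x ∈ G.ends m)).card) :=
        Finset.sum_le_sum hfibbd
    _ = 2 * H₃.card + ∑ m ∈ H₃, (N₀.filter (fun x => x ∈ G.ends m)).card := by
        rw [Finset.sum_add_distrib, Finset.sum_const, smul_eq_mul, mul_comm]
    _ ≤ 2 * H₃.card + N₀.card := by
        gcongr
        have hdc : ∀ m ∈ H₃, (N₀.filter (fun x => x ∈ G.ends m)).card
            = ∑ x ∈ N₀, if x ∈ G.ends m then 1 else 0 := fun m _ => Finset.card_filter _ _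
        rw [Finset.sum_congr rfl hdc, Finset.sum_comm]
        have : ∀ x ∈ N₀, (∑ m ∈ H₃, if x ∈ G.ends m then 1 else 0) ≤ 1 := by
          intro x _
          rw [← Finset.card_filter]
          refine Finset.card_le_one.mpr (fun e he f hf => ?_)
          rw [Finset.mem_filter] at he hf
          exact m₃.unique he.1 hf.1 he.2 hf.2
        calc ∑ x ∈ N₀, (∑ m ∈ H₃, if x ∈ G.ends m then 1 else 0) ≤ ∑ x ∈ N₀, 1 :=
              Finset.sum_le_sum this
          _ = N₀.card := by rw [Finset.sum_const, smul_eq_mul, mul_one]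


/-- Every cubic graph G satisfies ν₂(G) ≤ (|V(G)| + 2·ν₃(G))/4,
i.e. 4·ν₂(G) ≤ |V(G)| + 2·ν₃(G). -/
theorem cubic_nu2_le
    (G : Multigraph) (hloopless : G.Loopless) (hcubic : ∀ v : G.V, G.deg v = 3) :
    4 * G.nu2 ≤ Fintype.card G.V + 2 * G.nu3 := by
  classical
  have hempty : G.IsMatching ∅ := ⟨fun e he => absurd he (Finset.notMem_empty e),
    fun e he => absurd he (Finset.notMem_empty e)⟩
  have hne2 : {m | ∃ H H' : Finset G.E, G.IsMatching H ∧ G.IsMatching H' ∧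
      Disjoint H H' ∧ H.card + H'.card = m}.Nonempty :=
    ⟨0, ∅, ∅, hempty, hempty, disjoint_bot_left, by simp⟩
  have hbdd2 : BddAbove {m | ∃ H H' : Finset G.E, G.IsMatching H ∧ G.IsMatching H' ∧
      Disjoint H H' ∧ H.card + H'.card = m} := by
    refine ⟨2 * Fintype.card G.E, ?_⟩
    rintro x ⟨H, H', -, -, -, rfl⟩
    have h1 := Finset.card_le_univ H
    have h2 := Finset.card_le_univ H'
    omega
  have h2mem := Nat.sSup_mem hne2 hbdd2
  obtain ⟨H₁, H₂, m₁, m₂, d12, hsum⟩ := h2mem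
  -- maximum matching among "rest" edges
  obtain ⟨H₃, hH₃mem, hH₃max⟩ := Finset.exists_max_image
    ((Finset.univ : Finset (Finset G.E)).filter
      (fun M => G.IsMatching M ∧ ∀ e ∈ M, e ∉ H₁ ∧ e ∉ H₂))
    Finset.card ⟨∅, by simp [hempty]⟩
  rw [Finset.mem_filter] at hH₃mem
  obtain ⟨-, m₃, h₃R⟩ := hH₃mem
  have hmax : ∀ M : Finset G.E, G.IsMatching M → (∀ e ∈ M, e ∉ H₁ ∧ e ∉ H₂) →
      M.card ≤ H₃.card := by
    intro M hM hMR
    exact hH₃max M (Finset.mem_filter.mpr ⟨Finset.mem_univ M, hM, hMR⟩)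
  have hkey := key hloopless hcubic m₁ m₂ m₃ d12 h₃R hmax
  have hcov1 := card_cov hloopless m₁
  have hcov2 := card_cov hloopless m₂
  have hUI := Finset.card_union_add_card_inter (G.cov H₁) (G.cov H₂)
  have hcompl := Finset.card_add_card_compl (G.cov H₁ ∪ G.cov H₂)
  -- nu3 lower bound
  have hbdd3 : BddAbove {m | ∃ A B C : Finset G.E, G.IsMatching A ∧ G.IsMatching B ∧
      G.IsMatching C ∧ Disjoint A B ∧ Disjoint A C ∧ Disjoint B C ∧
      A.card + B.card + C.card = m} := by
    refine ⟨3 * Fintype.card G.E, ?_⟩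
    rintro x ⟨A, B, C, -, -, -, -, -, -, rfl⟩
    have h1 := Finset.card_le_univ A
    have h2 := Finset.card_le_univ B
    have h3 := Finset.card_le_univ C
    omega
  have d13 : Disjoint H₁ H₃ := Finset.disjoint_right.mpr (fun e he => (h₃R e he).1)
  have d23 : Disjoint H₂ H₃ := Finset.disjoint_right.mpr (fun e he => (h₃R e he).2)
  have h3le : H₁.card + H₂.card + H₃.card ≤ G.nu3 :=
    le_csSup hbdd3 ⟨H₁, H₂, H₃, m₁, m₂, m₃, d12, d13, d23, rfl⟩
  have hnu2 : G.nu2 = sSup {m | ∃ H H' : Finset G.E, G.IsMatching H ∧ G.IsMatching H' ∧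
      Disjoint H H' ∧ H.card + H'.card = m} := rfl
  omega


end Multigraph
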